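/- Backward induction preserves piecewise-linear concave (min-of-linear) structure: if V_{t+1}(I) = min_{γ∈Γ_{t+1}} ⟨γ, I⟩ for a finite nonempty set Γ_{t+1} ⊆ ℝ^X, and V_t is defined by V_t(I) = ⟨c, I⟩ + min_{u∈U} ∑_{o∈O} min_{γ∈Γ_{t+1}} ⟨γ, M_{u,o} I⟩, where U and O are finite and each M_{u,o} is a linear map on ℝ^X with nonnegative entries, then there exists a finite nonempty set Γ_t ⊆ ℝ^X such that V_t(I) = min_{γ∈Γ_t} ⟨γ, I⟩ for all I in the simplex. -/

import Mathlib

private lemma add_inf'_aux {α : Type*} (s : Finset α) (hs : s.Nonempty) (a : ℝ) (f : α → ℝ) :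
    a + s.inf' hs f = s.inf' hs (fun x => a + f x) := by
  apply le_antisymm
  · obtain ⟨b, hb, hbe⟩ := s.exists_mem_eq_inf' hs (fun x => a + f x)
    rw [hbe]
    exact add_le_add (le_refl a) (Finset.inf'_le _ hb)
  · obtain ⟨b, hb, hbe⟩ := s.exists_mem_eq_inf' hs f
    rw [hbe]
    exact Finset.inf'_le _ hb

private lemma sum_inf'_aux {O α : Type*} [Fintype O] [DecidableEq O] [DecidableEq α] (Γ : Finset α) (hΓ : Γ.Nonempty)
    [Nonempty {γ // γ ∈ Γ}]
    (f : O → α → ℝ) :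
    ∑ o : O, Γ.inf' hΓ (f o) =
      (Finset.univ : Finset (O → {γ // γ ∈ Γ})).inf' Finset.univ_nonempty
        (fun σ => ∑ o, f o (σ o)) := by
  apply le_antisymm
  · apply Finset.le_inf'
    intro σ _
    exact Finset.sum_le_sum fun o _ => Finset.inf'_le _ (σ o).2
  · have : ∀ o : O, ∃ γ : {γ // γ ∈ Γ}, Γ.inf' hΓ (f o) = f o γ := by
      intro o
      obtain ⟨γ, hγ, he⟩ := Γ.exists_mem_eq_inf' hΓ (f o)
      exact ⟨⟨γ, hγ⟩, he⟩
    choose σ hσ using this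
    calc Finset.univ.inf' Finset.univ_nonempty (fun σ : O → {γ // γ ∈ Γ} => ∑ o, f o (σ o))
        ≤ ∑ o : O, f o (σ o) := Finset.inf'_le _ (Finset.mem_univ σ)
      _ = ∑ o : O, Γ.inf' hΓ (f o) := Finset.sum_congr rfl fun o _ => (hσ o).symm

private lemma lin_expand_aux {X : Type*} [Fintype X] [DecidableEq X]
    (T : (X → ℝ) →ₗ[ℝ] (X → ℝ)) (γ I : X → ℝ) :
    ∑ y, γ y * T I y = ∑ x, I x * ∑ y, γ y * T (fun j => if x = j then 1 else 0) y := by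
  have hI : I = ∑ x : X, I x • (fun j => if x = j then (1:ℝ) else 0) := pi_eq_sum_univ I
  calc ∑ y, γ y * T I y
      = ∑ y, γ y * ∑ x, I x * T (fun j => if x = j then (1:ℝ) else 0) y := by
        refine Finset.sum_congr rfl fun y _ => ?_
        conv_lhs => rw [hI]
        rw [map_sum]
        simp [Finset.sum_apply, mul_comm]
    _ = ∑ y, ∑ x, I x * (γ y * T (fun j => if x = j then (1:ℝ) else 0) y) := by
        refine Finset.sum_congr rfl fun y _ => ?_
        rw [Finset.mul_sum]
        exact Finset.sum_congr rfl fun x _ => by ring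
    _ = ∑ x, I x * ∑ y, γ y * T (fun j => if x = j then 1 else 0) y := by
        rw [Finset.sum_comm]
        exact Finset.sum_congr rfl fun x _ => (Finset.mul_sum _ _ _).symm

/-- The Bellman backup of a min-of-linear value function is again a
min-of-linear function: there is a finite nonempty Γ_t representing V_t on the simplex. -/
theorem stmt_8 (X U O : Type*) [Fintype X] [Fintype U] [Fintype O]
    [Nonempty U] [Nonempty O] [DecidableEq (X → ℝ)]
    (c : X → ℝ)
    (M : U → O → (X → ℝ) →ₗ[ℝ] (X → ℝ))
    (hM : ∀ u o (I : X → ℝ), (∀ x, 0 ≤ I x) → ∀ x, 0 ≤ M u o I x)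
    (Γ' : Finset (X → ℝ)) (hΓ' : Γ'.Nonempty)
    (Vt : (X → ℝ) → ℝ)
    (hVt : ∀ I : X → ℝ, Vt I =
      (∑ x, c x * I x) +
      Finset.univ.inf' Finset.univ_nonempty (fun u : U =>
        ∑ o : O, Γ'.inf' hΓ' (fun γ => ∑ x, γ x * (M u o I) x))) :
    ∃ (Γt : Finset (X → ℝ)) (hΓt : Γt.Nonempty),
      ∀ I : X → ℝ, (∀ x, 0 ≤ I x) → ∑ x, I x = 1 →
        Vt I = Γt.inf' hΓt (fun γ => ∑ x, γ x * I x) := by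
  classical
  haveI : Nonempty {γ // γ ∈ Γ'} := ⟨⟨hΓ'.choose, hΓ'.choose_spec⟩⟩
  -- the candidate vectors
  set g : U × (O → {γ // γ ∈ Γ'}) → (X → ℝ) := fun p x =>
    c x + ∑ o, ∑ y, (p.2 o : X → ℝ) y * M p.1 o (fun j => if x = j then 1 else 0) y with hg
  refine ⟨Finset.univ.image g, (Finset.univ_nonempty).image g, fun I _ _ => ?_⟩
  rw [hVt I, Finset.inf'_image]
  have key : ∀ u : U, ∑ o : O, Γ'.inf' hΓ' (fun γ => ∑ x, γ x * (M u o I) x)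
      = (Finset.univ : Finset (O → {γ // γ ∈ Γ'})).inf' Finset.univ_nonempty
          (fun σ => ∑ o, ∑ x, (σ o : X → ℝ) x * (M u o I) x) := by
    intro u
    exact sum_inf'_aux Γ' hΓ' (fun o γ => ∑ x, γ x * (M u o I) x)
  calc (∑ x, c x * I x) +
        Finset.univ.inf' Finset.univ_nonempty (fun u : U =>
          ∑ o : O, Γ'.inf' hΓ' (fun γ => ∑ x, γ x * (M u o I) x))
      = (∑ x, c x * I x) +
        Finset.univ.inf' Finset.univ_nonempty (fun u : U =>
          (Finset.univ : Finset (O → {γ // γ ∈ Γ'})).inf' Finset.univ_nonempty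
            (fun σ => ∑ o, ∑ x, (σ o : X → ℝ) x * (M u o I) x)) := by
        congr 1
        exact Finset.inf'_congr _ rfl (fun u _ => key u)
    _ = (∑ x, c x * I x) +
        (Finset.univ : Finset (U × (O → {γ // γ ∈ Γ'}))).inf' Finset.univ_nonempty
          (fun p => ∑ o, ∑ x, (p.2 o : X → ℝ) x * (M p.1 o I) x) := by
        congr 1
        have h1 : ((Finset.univ : Finset U) ×ˢ (Finset.univ : Finset (O → {γ // γ ∈ Γ'}))) = Finset.univ :=
          Finset.univ_product_univ
        rw [(Finset.inf'_product_left (Finset.univ_nonempty.product Finset.univ_nonempty)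
          (fun p : U × (O → {γ // γ ∈ Γ'}) => ∑ o, ∑ x, (p.2 o : X → ℝ) x * (M p.1 o I) x)).symm]
        exact Finset.inf'_congr _ h1 (fun _ _ => rfl)
    _ = (Finset.univ : Finset (U × (O → {γ // γ ∈ Γ'}))).inf' Finset.univ_nonempty
          (fun p => (∑ x, c x * I x) + ∑ o, ∑ x, (p.2 o : X → ℝ) x * (M p.1 o I) x) := by
        exact add_inf'_aux _ _ _ _
    _ = (Finset.univ : Finset (U × (O → {γ // γ ∈ Γ'}))).inf' Finset.univ_nonempty
          ((fun γ => ∑ x, γ x * I x) ∘ g) := by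
        refine Finset.inf'_congr _ rfl (fun p _ => ?_)
        simp only [Function.comp, hg]
        rw [Finset.sum_congr rfl (fun o (_ : o ∈ Finset.univ) =>
          lin_expand_aux (M p.1 o) (p.2 o : X → ℝ) I)]
        rw [Finset.sum_comm]
        simp only [add_mul, Finset.sum_add_distrib]
        congr 1
        exact Finset.sum_congr rfl fun x _ => by
          rw [Finset.sum_mul]
          exact Finset.sum_congr rfl fun o _ => mul_comm _ _
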